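/- If c is a real constant such that for every integer n ≥ 1 there exist integers x and y with n < x² + y² < n + c·n^{1/4}, then c > 2^{-1/2}·5^{3/4}. -/

import Mathlib

theorem uchiyama_original_lower_bound (c : ℝ)
    (h : ∀ n : ℤ, 1 ≤ n → ∃ x y : ℤ,
      (n : ℝ) < (x : ℝ) ^ 2 + (y : ℝ) ^ 2 ∧
      (x : ℝ) ^ 2 + (y : ℝ) ^ 2 < (n : ℝ) + c * (n : ℝ) ^ ((1 : ℝ) / 4)) :
    c > (2 : ℝ) ^ (-(1 : ℝ) / 2) * (5 : ℝ) ^ ((3 : ℝ) / 4) := by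
  obtain ⟨x, y, h1, h2⟩ := h 20 (by norm_num)
  -- the sum is an integer > 20 that is a sum of two squares, so it's ≥ 25
  have hint : (20 : ℤ) < x ^ 2 + y ^ 2 := by
    have := h1
    push_cast at this ⊢
    exact Int.cast_lt.mp (by push_cast; linarith : ((20:ℤ):ℝ) < ((x ^ 2 + y ^ 2 : ℤ) : ℝ))
  have hle : (25 : ℤ) ≤ x ^ 2 + y ^ 2 := by
    by_contra hc
    push_neg at hc
    have hx : x ^ 2 ≤ 24 := by nlinarith [sq_nonneg y]
    have hy : y ^ 2 ≤ 24 := by nlinarith [sq_nonneg x]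
    have hx' : -4 ≤ x ∧ x ≤ 4 := by constructor <;> nlinarith
    have hy' : -4 ≤ y ∧ y ≤ 4 := by constructor <;> nlinarith
    obtain ⟨hx1, hx2⟩ := hx'
    obtain ⟨hy1, hy2⟩ := hy'
    interval_cases x <;> interval_cases y <;> omega
  have hle' : (25 : ℝ) ≤ (x : ℝ) ^ 2 + (y : ℝ) ^ 2 := by exact_mod_cast hle
  have hpos : (0 : ℝ) < (20 : ℝ) ^ ((1 : ℝ) / 4) := by positivity
  have hc5 : 5 < c * (20 : ℝ) ^ ((1 : ℝ) / 4) := by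
    have : (20 : ℝ) + c * (20 : ℝ) ^ ((1 : ℝ) / 4) > 25 := by
      calc (25 : ℝ) ≤ (x : ℝ) ^ 2 + (y : ℝ) ^ 2 := hle'
        _ < ((20 : ℤ) : ℝ) + c * ((20 : ℤ) : ℝ) ^ ((1 : ℝ) / 4) := h2
        _ = (20 : ℝ) + c * (20 : ℝ) ^ ((1 : ℝ) / 4) := by norm_num
    linarith
  have key : (2 : ℝ) ^ (-(1 : ℝ) / 2) * (5 : ℝ) ^ ((3 : ℝ) / 4)
      * (20 : ℝ) ^ ((1 : ℝ) / 4) = 5 := by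
    have h20 : (20 : ℝ) ^ ((1 : ℝ) / 4)
        = (2 : ℝ) ^ ((1 : ℝ) / 2) * (5 : ℝ) ^ ((1 : ℝ) / 4) := by
      have : (20 : ℝ) = (4 : ℝ) * 5 := by norm_num
      rw [this, Real.mul_rpow (by norm_num) (by norm_num)]
      congr 1
      rw [show (4 : ℝ) = (2 : ℝ) ^ (2 : ℕ) by norm_num, ← Real.rpow_natCast 2 2,
        ← Real.rpow_mul (by norm_num)]
      norm_num
    rw [h20]
    rw [show (2 : ℝ) ^ (-(1:ℝ)/2) * (5:ℝ) ^ ((3:ℝ)/4) * ((2:ℝ) ^ ((1:ℝ)/2) * (5:ℝ) ^ ((1:ℝ)/4))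
      = ((2:ℝ) ^ (-(1:ℝ)/2) * (2:ℝ) ^ ((1:ℝ)/2)) * ((5:ℝ) ^ ((3:ℝ)/4) * (5:ℝ) ^ ((1:ℝ)/4)) by ring]
    rw [← Real.rpow_add (by norm_num), ← Real.rpow_add (by norm_num)]
    norm_num
  nlinarith [hpos, hc5, key]
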